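/- Let Γ be a countable group and Λ ≤ Γ a subgroup such that (Γ,Λ) is a Hecke pair, i.e. every Λ-orbit in Γ/Λ is finite (equivalently, Λ ∩ γΛγ⁻¹ has finite index in Λ for all γ ∈ Γ). Then for every finite subset S ⊆ Γ there exist a finite subset S̃ ⊆ Γ with S ⊆ S̃ and an affine map from probability measures supported in S to Λ-absorbing probability measures supported in S̃, sending each τ to a measure τ̃ with supp(τ) ⊆ supp(τ̃). -/

import Mathlib

open scoped ENNReal

/-- The pushforward of a measure `τ` on `Γ` to the coset space `Γ ⧸ Λ`. -/
noncomputable def pushQuot {Γ : Type*} [Group Γ] (Λ : Subgroup Γ) (τ : Γ → ℝ≥0∞)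
    (c : Γ ⧸ Λ) : ℝ≥0∞ :=
  ∑' l : Λ, τ (Quotient.out c * (l : Γ))

/-- `τ` is `Λ`-absorbing. -/
def IsAbsorbing {Γ : Type*} [Group Γ] (Λ : Subgroup Γ) (τ : Γ → ℝ≥0∞) : Prop :=
  ∀ (l : Λ) (c : Γ ⧸ Λ), pushQuot Λ τ ((l : Γ) • c) = pushQuot Λ τ c

section aux
variable {Γ : Type*} [Group Γ] (Λ : Subgroup Γ)

attribute [local instance] Classical.propDecidable Classical.decEq

/-- A representative of the coset `c`, chosen to be `s` itself on the coset of `s`. -/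
noncomputable def repFn (s : Γ) (c : Γ ⧸ Λ) : Γ :=
  if c = (s : Γ ⧸ Λ) then s else Quotient.out c

lemma mk_repFn (s : Γ) (c : Γ ⧸ Λ) : (QuotientGroup.mk (repFn Λ s c) : Γ ⧸ Λ) = c := by
  unfold repFn
  split
  · simp_all
  · exact QuotientGroup.out_eq' c

lemma repFn_inj (s : Γ) : Function.Injective (repFn Λ s) := by
  intro c d h
  rw [← mk_repFn Λ s c, ← mk_repFn Λ s d, h]

variable (hHecke : ∀ γ : Γ,
      Set.Finite {c : Γ ⧸ Λ | ∃ l : Λ, c = (l : Γ) • ((γ : Γ ⧸ Λ))})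

/-- The finite Λ-orbit of the coset of `s`. -/
noncomputable def orb (s : Γ) : Finset (Γ ⧸ Λ) := (hHecke s).toFinset

lemma mem_orb {s : Γ} {c : Γ ⧸ Λ} :
    c ∈ orb Λ hHecke s ↔ ∃ l : Λ, c = (l : Γ) • ((s : Γ ⧸ Λ)) := by
  simp [orb]

lemma self_mem_orb (s : Γ) : ((s : Γ ⧸ Λ)) ∈ orb Λ hHecke s :=
  (mem_orb Λ hHecke).mpr ⟨1, by simp⟩

lemma smul_mem_orb {s : Γ} (l : Λ) {c : Γ ⧸ Λ} :
    ((l : Γ) • c) ∈ orb Λ hHecke s ↔ c ∈ orb Λ hHecke s := by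
  constructor
  · intro h
    obtain ⟨l', hl'⟩ := (mem_orb Λ hHecke).mp h
    refine (mem_orb Λ hHecke).mpr ⟨l⁻¹ * l', ?_⟩
    have : c = (l : Γ)⁻¹ • ((l : Γ) • c) := by simp [smul_smul]
    rw [this, hl', smul_smul]
    push_cast
    rfl
  · intro h
    obtain ⟨l', hl'⟩ := (mem_orb Λ hHecke).mp h
    refine (mem_orb Λ hHecke).mpr ⟨l * l', ?_⟩
    rw [hl', smul_smul]
    push_cast
    rfl

/-- The chosen representatives of the orbit of `s`. -/
noncomputable def repsF (s : Γ) : Finset Γ := (orb Λ hHecke s).image (repFn Λ s)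

lemma card_repsF (s : Γ) : (repsF Λ hHecke s).card = (orb Λ hHecke s).card :=
  Finset.card_image_of_injective _ (repFn_inj Λ s)

lemma mem_repsF_iff {s g : Γ} :
    g ∈ repsF Λ hHecke s ↔ ((g : Γ ⧸ Λ)) ∈ orb Λ hHecke s ∧ g = repFn Λ s ((g : Γ ⧸ Λ)) := by
  constructor
  · rintro h
    obtain ⟨c, hc, rfl⟩ := Finset.mem_image.mp h
    rw [mk_repFn]
    exact ⟨hc, rfl⟩
  · rintro ⟨h1, h2⟩
    exact Finset.mem_image.mpr ⟨_, h1, h2.symm⟩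

lemma self_mem_repsF (s : Γ) : s ∈ repsF Λ hHecke s := by
  refine (mem_repsF_iff Λ hHecke).mpr ⟨self_mem_orb Λ hHecke s, ?_⟩
  unfold repFn
  simp

/-- The uniform probability measure on `repsF s`. -/
noncomputable def unif (s : Γ) (g : Γ) : ℝ≥0∞ :=
  if g ∈ repsF Λ hHecke s then ((orb Λ hHecke s).card : ℝ≥0∞)⁻¹ else 0

lemma card_orb_ne_zero (s : Γ) : ((orb Λ hHecke s).card : ℝ≥0∞) ≠ 0 := by
  simp only [ne_eq, Nat.cast_eq_zero, Finset.card_eq_zero]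
  intro h
  exact absurd (self_mem_orb Λ hHecke s) (by simp [h])

lemma unif_self_ne_zero (s : Γ) : unif Λ hHecke s s ≠ 0 := by
  rw [unif, if_pos (self_mem_repsF Λ hHecke s)]
  simp [ENNReal.inv_ne_zero]

lemma tsum_unif (s : Γ) : ∑' g, unif Λ hHecke s g = 1 := by
  rw [tsum_eq_sum (s := repsF Λ hHecke s) (fun g hg => by simp [unif, hg])]
  have h : ∀ g ∈ repsF Λ hHecke s,
      unif Λ hHecke s g = ((orb Λ hHecke s).card : ℝ≥0∞)⁻¹ := fun g hg => if_pos hg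
  rw [Finset.sum_congr rfl h, Finset.sum_const, card_repsF, nsmul_eq_mul]
  exact ENNReal.mul_inv_cancel (card_orb_ne_zero Λ hHecke s) (by simp)

lemma pushQuot_unif (s : Γ) (c : Γ ⧸ Λ) :
    pushQuot Λ (unif Λ hHecke s) c =
      if c ∈ orb Λ hHecke s then ((orb Λ hHecke s).card : ℝ≥0∞)⁻¹ else 0 := by
  have key : ∀ l : Λ, Quotient.out c * (l : Γ) ∈ repsF Λ hHecke s ↔
      (c ∈ orb Λ hHecke s ∧ Quotient.out c * (l : Γ) = repFn Λ s c) := by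
    intro l
    have hmk : ((Quotient.out c * (l : Γ) : Γ) : Γ ⧸ Λ) = c := by
      rw [QuotientGroup.mk_mul_of_mem _ l.2, QuotientGroup.out_eq']
    rw [mem_repsF_iff Λ hHecke, hmk]
  by_cases hc : c ∈ orb Λ hHecke s
  · rw [if_pos hc]
    have hrep : ((repFn Λ s c : Γ) : Γ ⧸ Λ) = ((Quotient.out c : Γ) : Γ ⧸ Λ) := by
      rw [mk_repFn, QuotientGroup.out_eq']
    obtain ⟨l₀, hl₀⟩ : ∃ l₀ : Λ, Quotient.out c * (l₀ : Γ) = repFn Λ s c := by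
      have := QuotientGroup.eq.mp hrep.symm
      exact ⟨⟨(Quotient.out c)⁻¹ * repFn Λ s c, this⟩, by group⟩
    rw [pushQuot]
    rw [tsum_eq_single l₀ ?_]
    · rw [unif, if_pos ((key l₀).mpr ⟨hc, hl₀⟩)]
    · intro l hl
      rw [unif, if_neg]
      intro hmem
      obtain ⟨-, h2⟩ := (key l).mp hmem
      apply hl
      have : (l : Γ) = (l₀ : Γ) := by
        have := h2.trans hl₀.symm
        exact mul_left_cancel this
      exact Subtype.ext this
  · rw [if_neg hc, pushQuot]
    rw [Summable.tsum_eq_zero_iff ENNReal.summable |>.mpr]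
    intro l
    rw [unif, if_neg (fun hmem => hc ((key l).mp hmem).1)]

lemma isAbsorbing_unif (s : Γ) : IsAbsorbing Λ (unif Λ hHecke s) := by
  intro l c
  rw [pushQuot_unif, pushQuot_unif]
  rw [if_congr (smul_mem_orb Λ hHecke l) rfl rfl]

end aux

theorem stmt3 {Γ : Type*} [Group Γ] [Countable Γ] (Λ : Subgroup Γ)
    (hHecke : ∀ γ : Γ,
      Set.Finite {c : Γ ⧸ Λ | ∃ l : Λ, c = (l : Γ) • ((γ : Γ ⧸ Λ))})
    (S : Finset Γ) :
    ∃ (S' : Finset Γ) (T : (Γ → ℝ≥0∞) → (Γ → ℝ≥0∞)),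
      (S : Set Γ) ⊆ (S' : Set Γ) ∧
      -- `T` is affine on probability measures supported in `S`
      (∀ (a b : ℝ≥0∞) (τ σ : Γ → ℝ≥0∞), a + b = 1 →
        (∑' g, τ g = 1) → (∀ g ∉ S, τ g = 0) →
        (∑' g, σ g = 1) → (∀ g ∉ S, σ g = 0) →
        T (fun g => a * τ g + b * σ g) = fun g => a * T τ g + b * T σ g) ∧
      -- `T` sends probability measures supported in `S` to `Λ`-absorbing
      -- probability measures supported in `S'`, enlarging supports
      (∀ τ : Γ → ℝ≥0∞, (∑' g, τ g = 1) → (∀ g ∉ S, τ g = 0) →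
        (∑' g, T τ g = 1) ∧ IsAbsorbing Λ (T τ) ∧
        (∀ g ∉ S', T τ g = 0) ∧ (∀ g, τ g ≠ 0 → T τ g ≠ 0)) := by
  classical
  refine ⟨S ∪ S.biUnion (fun s => repsF Λ hHecke s),
    fun τ g => ∑ s ∈ S, τ s * unif Λ hHecke s g, ?_, ?_, ?_⟩
  · intro g hg
    simp only [Finset.coe_union, Set.mem_union]
    exact Or.inl hg
  · intro a b τ σ _ _ _ _ _
    funext g
    simp only [add_mul, mul_assoc, Finset.sum_add_distrib, Finset.mul_sum]
  · intro τ hτ1 hτS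
    have hmass : ∑' g, ∑ s ∈ S, τ s * unif Λ hHecke s g = 1 := by
      rw [Summable.tsum_finsetSum (fun s _ => ENNReal.summable)]
      calc ∑ s ∈ S, ∑' g, τ s * unif Λ hHecke s g
          = ∑ s ∈ S, τ s := by
            refine Finset.sum_congr rfl fun s _ => ?_
            rw [ENNReal.tsum_mul_left, tsum_unif, mul_one]
        _ = 1 := by rw [← tsum_eq_sum (L := SummationFilter.unconditional Γ) (fun g hg => hτS g hg), hτ1]
    refine ⟨hmass, ?_, ?_, ?_⟩
    · intro l c
      have hpush : ∀ d : Γ ⧸ Λ,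
          pushQuot Λ (fun g => ∑ s ∈ S, τ s * unif Λ hHecke s g) d
            = ∑ s ∈ S, τ s * pushQuot Λ (unif Λ hHecke s) d := by
        intro d
        rw [pushQuot, Summable.tsum_finsetSum (fun s _ => ENNReal.summable)]
        exact Finset.sum_congr rfl fun s _ => by rw [ENNReal.tsum_mul_left]; rfl
      rw [hpush, hpush]
      exact Finset.sum_congr rfl fun s _ => by rw [isAbsorbing_unif Λ hHecke s l c]
    · intro g hg
      refine Finset.sum_eq_zero fun s hs => ?_
      have : g ∉ repsF Λ hHecke s := fun h =>
        hg (Finset.mem_union_right _ (Finset.mem_biUnion.mpr ⟨s, hs, h⟩))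
      rw [unif, if_neg this, mul_zero]
    · intro g hgτ
      have hgS : g ∈ S := by by_contra h; exact hgτ (hτS g h)
      intro h0
      have := (Finset.sum_eq_zero_iff.mp h0) g hgS
      rcases mul_eq_zero.mp this with h | h
      · exact hgτ h
      · exact unif_self_ne_zero Λ hHecke g h
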